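/- The integer LINEAR EQUALITY rule is equivalence preserving: given a linear equality Σ_{i≤p} a_i x_i - Σ_{i>p} a_i x_i = b over integer variables with positive integer coefficients a_i, integer b, and integer interval domains [l_i..h_i], every integer solution in the original box lies in the reduced box where for j ≤ p the interval is [max(l_j, ⌈γ_j⌉) .. min(h_j, ⌊α_j⌋)] and for j > p it is [max(l_j, ⌈β_j⌉) .. min(h_j, ⌊δ_j⌋)], and conversely every integer solution in the reduced box lies in the original box. -/
import Mathlib


open Finset

lemma ceil_div_le_of_le (X A d : ℤ) (hA : 0 < A) (hle : X ≤ A * d) :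
    ⌈((X : ℚ) / (A : ℚ))⌉ ≤ d := by
  rw [Int.ceil_le]
  rw [div_le_iff₀ (by exact_mod_cast hA)]
  have : (X : ℚ) ≤ ((A * d : ℤ) : ℚ) := by exact_mod_cast hle
  push_cast at this ⊢
  linarith

lemma le_floor_div_of_le (X A d : ℤ) (hA : 0 < A) (hle : A * d ≤ X) :
    d ≤ ⌊((X : ℚ) / (A : ℚ))⌋ := by
  rw [Int.le_floor]
  rw [le_div_iff₀ (by exact_mod_cast hA)]
  have : ((A * d : ℤ) : ℚ) ≤ (X : ℚ) := by exact_mod_cast hle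
  push_cast at this ⊢
  linarith

theorem linear_equality_equivalence_preserving
    (n p : ℕ) (a l h : Fin n → ℤ) (b : ℤ)
    (ha : ∀ i, 0 < a i)
    (pos neg : Finset (Fin n))
    (hpos : pos = Finset.univ.filter (fun i : Fin n => (i : ℕ) < p))
    (hneg : neg = Finset.univ.filter (fun i : Fin n => ¬ (i : ℕ) < p)) :
    (∀ d : Fin n → ℤ,
      (∑ i ∈ pos, a i * d i - ∑ i ∈ neg, a i * d i = b) →
      (∀ i, l i ≤ d i ∧ d i ≤ h i) →
      ((∀ j ∈ pos,
          max (l j) ⌈(((b - ∑ i ∈ pos.erase j, a i * h i + ∑ i ∈ neg, a i * l i : ℤ) : ℚ)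
            / ((a j : ℤ) : ℚ))⌉ ≤ d j ∧
          d j ≤ min (h j) ⌊(((b - ∑ i ∈ pos.erase j, a i * l i + ∑ i ∈ neg, a i * h i : ℤ) : ℚ)
            / ((a j : ℤ) : ℚ))⌋) ∧
       (∀ j ∈ neg,
          max (l j) ⌈(((-b + ∑ i ∈ pos, a i * l i - ∑ i ∈ neg.erase j, a i * h i : ℤ) : ℚ)
            / ((a j : ℤ) : ℚ))⌉ ≤ d j ∧
          d j ≤ min (h j) ⌊(((-b + ∑ i ∈ pos, a i * h i - ∑ i ∈ neg.erase j, a i * l i : ℤ) : ℚ)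
            / ((a j : ℤ) : ℚ))⌋))) ∧
    (∀ d : Fin n → ℤ,
      (∑ i ∈ pos, a i * d i - ∑ i ∈ neg, a i * d i = b) →
      ((∀ j ∈ pos,
          max (l j) ⌈(((b - ∑ i ∈ pos.erase j, a i * h i + ∑ i ∈ neg, a i * l i : ℤ) : ℚ)
            / ((a j : ℤ) : ℚ))⌉ ≤ d j ∧
          d j ≤ min (h j) ⌊(((b - ∑ i ∈ pos.erase j, a i * l i + ∑ i ∈ neg, a i * h i : ℤ) : ℚ)
            / ((a j : ℤ) : ℚ))⌋) ∧
       (∀ j ∈ neg,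
          max (l j) ⌈(((-b + ∑ i ∈ pos, a i * l i - ∑ i ∈ neg.erase j, a i * h i : ℤ) : ℚ)
            / ((a j : ℤ) : ℚ))⌉ ≤ d j ∧
          d j ≤ min (h j) ⌊(((-b + ∑ i ∈ pos, a i * h i - ∑ i ∈ neg.erase j, a i * l i : ℤ) : ℚ)
            / ((a j : ℤ) : ℚ))⌋)) →
      (∀ i, l i ≤ d i ∧ d i ≤ h i)) := by
  constructor
  · intro d heq hbox
    have hsum_le : ∀ s : Finset (Fin n), ∑ i ∈ s, a i * d i ≤ ∑ i ∈ s, a i * h i :=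
      fun s => Finset.sum_le_sum fun i _ =>
        mul_le_mul_of_nonneg_left (hbox i).2 (le_of_lt (ha i))
    have hsum_ge : ∀ s : Finset (Fin n), ∑ i ∈ s, a i * l i ≤ ∑ i ∈ s, a i * d i :=
      fun s => Finset.sum_le_sum fun i _ =>
        mul_le_mul_of_nonneg_left (hbox i).1 (le_of_lt (ha i))
    constructor
    · intro j hj
      have hsplit : a j * d j + ∑ i ∈ pos.erase j, a i * d i = ∑ i ∈ pos, a i * d i :=
        Finset.add_sum_erase pos (fun i => a i * d i) hj
      have h1 := hsum_le (pos.erase j)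
      have h2 := hsum_ge (pos.erase j)
      have h3 := hsum_le neg
      have h4 := hsum_ge neg
      constructor
      · refine max_le (hbox j).1 ?_
        exact ceil_div_le_of_le _ _ _ (ha j) (by linarith)
      · refine le_min (hbox j).2 ?_
        exact le_floor_div_of_le _ _ _ (ha j) (by linarith)
    · intro j hj
      have hsplit : a j * d j + ∑ i ∈ neg.erase j, a i * d i = ∑ i ∈ neg, a i * d i :=
        Finset.add_sum_erase neg (fun i => a i * d i) hj
      have h1 := hsum_le (neg.erase j)
      have h2 := hsum_ge (neg.erase j)
      have h3 := hsum_le pos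
      have h4 := hsum_ge pos
      constructor
      · refine max_le (hbox j).1 ?_
        exact ceil_div_le_of_le _ _ _ (ha j) (by linarith)
      · refine le_min (hbox j).2 ?_
        exact le_floor_div_of_le _ _ _ (ha j) (by linarith)
  · intro d _ hred i
    by_cases hi : (i : ℕ) < p
    · have hmem : i ∈ pos := by rw [hpos]; simp [hi]
      obtain ⟨h1, h2⟩ := hred.1 i hmem
      exact ⟨le_trans (le_max_left _ _) h1, le_trans h2 (min_le_left _ _)⟩
    · have hmem : i ∈ neg := by rw [hneg]; simp; omega
      obtain ⟨h1, h2⟩ := hred.2 i hmem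
      exact ⟨le_trans (le_max_left _ _) h1, le_trans h2 (min_le_left _ _)⟩
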